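/- Let $\epsilon \in (0, 1/2)$ and define on $\mathbb{D}^2$ the functions $F(z,w) = z^3 w^2$ and $F_\epsilon(z,w) = \dfrac{z^3w^2 - \epsilon(z^3 - w^2)}{1 + \epsilon(z^3 - w^2)}$. Then $F_\epsilon$ is holomorphic on $\mathbb{D}^2$, $\sup_{\mathbb{D}^2}|F_\epsilon| \leq 1$, and $F_\epsilon(\lambda) = F(\lambda)$ for every $\lambda$ in the Neil parabola intersected with $\mathbb{D}^2$. -/

import Mathlib

open Complex

lemma den_ne (ε : ℝ) (h0 : 0 < ε) (h2 : ε < 1/2) (a b : ℂ) (ha : ‖a‖ < 1) (hb : ‖b‖ < 1) :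
    1 + (ε : ℂ) * (a - b) ≠ 0 := by
  intro h
  have h1 : (ε : ℂ) * (a - b) = -1 := by linear_combination h
  have h3 : ‖(ε : ℂ) * (a - b)‖ = 1 := by rw [h1]; simp
  have h4 : ‖(ε : ℂ) * (a - b)‖ ≤ ε * (‖a‖ + ‖b‖) := by
    rw [norm_mul, Complex.norm_real, Real.norm_of_nonneg h0.le]
    exact mul_le_mul_of_nonneg_left (norm_sub_le a b) h0.le
  nlinarith [norm_nonneg a, norm_nonneg b]

lemma key (ε : ℝ) (h0 : 0 < ε) (h2 : ε < 1/2) (a b : ℂ) (ha : ‖a‖ < 1) (hb : ‖b‖ < 1) :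
    ‖a * b - (ε : ℂ) * (a - b)‖ ≤ ‖1 + (ε : ℂ) * (a - b)‖ := by
  have hsq : normSq (a * b - (ε : ℂ) * (a - b)) ≤ normSq (1 + (ε : ℂ) * (a - b)) := by
    have e1 : normSq (1 + (ε : ℂ) * (a - b)) =
        1 + ε ^ 2 * normSq (a - b) + 2 * ε * (a.re - b.re) := by
      simp [Complex.normSq_apply, Complex.add_re, Complex.add_im, Complex.mul_re,
        Complex.mul_im, Complex.sub_re, Complex.sub_im, Complex.ofReal_re, Complex.ofReal_im]
      ring
    have e2 : normSq (a * b - (ε : ℂ) * (a - b)) =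
        normSq a * normSq b + ε ^ 2 * normSq (a - b)
          - 2 * ε * (normSq a * b.re - normSq b * a.re) := by
      simp [Complex.normSq_apply, Complex.add_re, Complex.add_im, Complex.mul_re,
        Complex.mul_im, Complex.sub_re, Complex.sub_im, Complex.ofReal_re, Complex.ofReal_im]
      ring
    rw [e1, e2]
    have hadre : |a.re| ≤ ‖a‖ := Complex.abs_re_le_norm a
    have hbdre : |b.re| ≤ ‖b‖ := Complex.abs_re_le_norm b
    have hna : normSq a = ‖a‖ ^ 2 := by rw [Complex.normSq_eq_norm_sq]
    have hnb : normSq b = ‖b‖ ^ 2 := by rw [Complex.normSq_eq_norm_sq]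
    set x := ‖a‖
    set y := ‖b‖
    have hx0 : 0 ≤ x := norm_nonneg a
    have hy0 : 0 ≤ y := norm_nonneg b
    rw [hna, hnb]
    have hxy : x * y ≤ 1 := by nlinarith
    have h5 : (1 - x) * (1 - y) * (1 - x * y) ≥ 0 :=
      mul_nonneg (mul_nonneg (by linarith) (by linarith)) (by linarith)
    have h6 : (2 * ε) * ((1 - y ^ 2) * (a.re + x)) ≥ 0 :=
      mul_nonneg (by linarith) (mul_nonneg (by nlinarith) (by nlinarith [abs_le.mp hadre]))
    have h7 : (2 * ε) * ((1 - x ^ 2) * (y - b.re)) ≥ 0 :=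
      mul_nonneg (by linarith) (mul_nonneg (by nlinarith) (by nlinarith [abs_le.mp hbdre]))
    have h8 : (1 - 2 * ε) * (x * (1 - y ^ 2) + y * (1 - x ^ 2)) ≥ 0 :=
      mul_nonneg (by linarith) (by nlinarith)
    nlinarith [h5, h6, h7, h8]
  calc ‖a * b - (ε : ℂ) * (a - b)‖ = Real.sqrt (normSq (a * b - (ε : ℂ) * (a - b))) := by
        rw [Complex.norm_def]
    _ ≤ Real.sqrt (normSq (1 + (ε : ℂ) * (a - b))) := Real.sqrt_le_sqrt hsq
    _ = ‖1 + (ε : ℂ) * (a - b)‖ := by rw [Complex.norm_def]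

theorem stmt14 (eps : ℝ) (h0 : 0 < eps) (h2 : eps < 1 / 2) :
    DifferentiableOn ℂ
      (fun p : ℂ × ℂ =>
        (p.1 ^ 3 * p.2 ^ 2 - (eps : ℂ) * (p.1 ^ 3 - p.2 ^ 2)) /
          (1 + (eps : ℂ) * (p.1 ^ 3 - p.2 ^ 2)))
      {p : ℂ × ℂ | ‖p.1‖ < 1 ∧ ‖p.2‖ < 1} ∧
    (∀ p : ℂ × ℂ, ‖p.1‖ < 1 → ‖p.2‖ < 1 →
      ‖(p.1 ^ 3 * p.2 ^ 2 - (eps : ℂ) * (p.1 ^ 3 - p.2 ^ 2)) /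
          (1 + (eps : ℂ) * (p.1 ^ 3 - p.2 ^ 2))‖ ≤ 1) ∧
    (∀ p : ℂ × ℂ, ‖p.1‖ < 1 → ‖p.2‖ < 1 → p.1 ^ 3 = p.2 ^ 2 →
      (p.1 ^ 3 * p.2 ^ 2 - (eps : ℂ) * (p.1 ^ 3 - p.2 ^ 2)) /
          (1 + (eps : ℂ) * (p.1 ^ 3 - p.2 ^ 2)) = p.1 ^ 3 * p.2 ^ 2) := by
  have hcube : ∀ (z : ℂ), ‖z‖ < 1 → ‖z ^ 3‖ < 1 := fun z hz => by
    rw [norm_pow]; exact pow_lt_one₀ (norm_nonneg z) hz (by norm_num)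
  have hsq' : ∀ (z : ℂ), ‖z‖ < 1 → ‖z ^ 2‖ < 1 := fun z hz => by
    rw [norm_pow]; exact pow_lt_one₀ (norm_nonneg z) hz (by norm_num)
  refine ⟨?_, fun p h1 h2' => ?_, fun p h1 h2' h3 => ?_⟩
  · have hf : DifferentiableOn ℂ
        (fun p : ℂ × ℂ => p.1 ^ 3 * p.2 ^ 2 - (eps : ℂ) * (p.1 ^ 3 - p.2 ^ 2))
        {p : ℂ × ℂ | ‖p.1‖ < 1 ∧ ‖p.2‖ < 1} := by
      apply Differentiable.differentiableOn; fun_prop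
    have hg : DifferentiableOn ℂ
        (fun p : ℂ × ℂ => 1 + (eps : ℂ) * (p.1 ^ 3 - p.2 ^ 2))
        {p : ℂ × ℂ | ‖p.1‖ < 1 ∧ ‖p.2‖ < 1} := by
      apply Differentiable.differentiableOn; fun_prop
    have hne : ∀ p ∈ {p : ℂ × ℂ | ‖p.1‖ < 1 ∧ ‖p.2‖ < 1},
        1 + (eps : ℂ) * (p.1 ^ 3 - p.2 ^ 2) ≠ 0 :=
      fun (p : ℂ × ℂ) (hp : ‖p.1‖ < 1 ∧ ‖p.2‖ < 1) =>
        den_ne eps h0 h2 (p.1 ^ 3) (p.2 ^ 2) (hcube _ hp.1) (hsq' _ hp.2)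
    simp only [div_eq_mul_inv]
    exact hf.mul (hg.inv hne)
  · rw [norm_div]
    have hd := den_ne eps h0 h2 (p.1 ^ 3) (p.2 ^ 2) (hcube _ h1) (hsq' _ h2')
    have hdpos : 0 < ‖1 + (eps : ℂ) * (p.1 ^ 3 - p.2 ^ 2)‖ := norm_pos_iff.mpr hd
    rw [div_le_one hdpos]
    exact key eps h0 h2 (p.1 ^ 3) (p.2 ^ 2) (hcube _ h1) (hsq' _ h2')
  · rw [h3, sub_self, mul_zero, sub_zero, add_zero, div_one]
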